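/- Let a, b, c be real numbers with 0 ≤ a ≤ b, b < c and a² + b² ≤ c², and set k = √((b²−a²)/(c²−a²)). Then the area of the fundamental domain of the immersed surface, computed from the metric g = P(y) dx² + (2P(y)/(Q+2P(y))) dy², satisfies ∫₀^{2π} ∫₀^{2π} √( P(y) · 2P(y)/(Q + 2P(y)) ) dx dy = (4π/√(c²−a²)) · ( 2(c²−a²)·E(k) − (c²−a²−b²)·K(k) ), i.e. it equals S(a,b,c). -/

import Mathlib

set_option maxHeartbeats 1000000


open Real

/-- The complete elliptic integral of the first kind,
`K(k) = ∫₀¹ dα/(√(1−α²)·√(1−k²α²))`. -/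
noncomputable def ellipticK (k : ℝ) : ℝ :=
  ∫ α in (0:ℝ)..1, 1 / (Real.sqrt (1 - α ^ 2) * Real.sqrt (1 - k ^ 2 * α ^ 2))

/-- The complete elliptic integral of the second kind,
`E(k) = ∫₀¹ √(1−k²α²)/√(1−α²) dα`. -/
noncomputable def ellipticE (k : ℝ) : ℝ :=
  ∫ α in (0:ℝ)..1, Real.sqrt (1 - k ^ 2 * α ^ 2) / Real.sqrt (1 - α ^ 2)

/-- `P(y) = (c² + (b²−a²)·cos 2y)/2`. -/
noncomputable def Pm (a b c y : ℝ) : ℝ := (c ^ 2 + (b ^ 2 - a ^ 2) * Real.cos (2 * y)) / 2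

/-- `Q = c² − a² − b²`. -/
noncomputable def Qm (a b c : ℝ) : ℝ := c ^ 2 - a ^ 2 - b ^ 2

open MeasureTheory intervalIntegral Set in
lemma aux_ae_ne_real (c : ℝ) : ∀ᵐ x : ℝ, x ≠ c := by
  have h : (volume : Measure ℝ) {c} = 0 := measure_singleton c
  rw [ae_iff]
  simpa [Set.setOf_eq_eq_singleton] using h

open MeasureTheory intervalIntegral Set in
lemma aux_ii_base : IntervalIntegrable (fun x : ℝ => 1 / Real.sqrt (1 - x ^ 2)) volume 0 1 := by
  have h1 : IntervalIntegrable (fun x : ℝ => (1 - x) ^ (-(1/2) : ℝ)) volume 0 1 := by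
    have h := (intervalIntegral.intervalIntegrable_rpow' (a := (1:ℝ)) (b := 0)
      (r := -(1/2)) (by norm_num)).comp_sub_left 1
    norm_num at h
    exact h
  refine h1.mono_fun' ?_ ?_
  · refine Measurable.aestronglyMeasurable ?_
    exact measurable_const.div ((measurable_const.sub (measurable_id.pow_const 2)).sqrt)
  · rw [Filter.EventuallyLE, ae_restrict_iff' measurableSet_uIoc]
    refine MeasureTheory.ae_of_all _ (fun x hx => ?_)
    rw [Set.uIoc_of_le (by norm_num : (0:ℝ) ≤ 1)] at hx
    obtain ⟨hx0, hx1⟩ := hx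
    have h1x : 0 ≤ 1 - x := by linarith
    have hrw : ((1 : ℝ) - x) ^ (-(1/2) : ℝ) = 1 / Real.sqrt (1 - x) := by
      rw [Real.rpow_neg h1x, Real.sqrt_eq_rpow]
      norm_num
    rw [hrw, Real.norm_eq_abs, abs_of_nonneg (by positivity)]
    rcases eq_or_lt_of_le h1x with h | h
    · have hx1' : x = 1 := by linarith
      subst hx1'
      norm_num
    · have h2 : 0 < Real.sqrt (1 - x) := Real.sqrt_pos.mpr h
      have hle : 1 - x ≤ 1 - x ^ 2 := by nlinarith
      exact one_div_le_one_div_of_le h2 (Real.sqrt_le_sqrt hle)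

open MeasureTheory intervalIntegral Set in
lemma aux_ii_gE {m : ℝ} (hm0 : 0 ≤ m) :
    IntervalIntegrable (fun α : ℝ => Real.sqrt (1 - m * α ^ 2) / Real.sqrt (1 - α ^ 2))
      volume 0 1 := by
  refine aux_ii_base.mono_fun' ?_ ?_
  · refine Measurable.aestronglyMeasurable ?_
    exact ((measurable_const.sub ((measurable_id.pow_const 2).const_mul m)).sqrt).div
      ((measurable_const.sub (measurable_id.pow_const 2)).sqrt)
  · rw [Filter.EventuallyLE, ae_restrict_iff' measurableSet_uIoc]
    refine MeasureTheory.ae_of_all _ (fun x hx => ?_)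
    rw [Real.norm_eq_abs, abs_of_nonneg (by positivity)]
    have hnum : Real.sqrt (1 - m * x ^ 2) ≤ 1 := Real.sqrt_le_one.mpr (by nlinarith [sq_nonneg x])
    rcases eq_or_lt_of_le (Real.sqrt_nonneg (1 - x ^ 2)) with h | h
    · rw [← h]
      simp
    · rw [div_le_div_iff₀ h h]
      nlinarith [Real.sqrt_nonneg (1 - x ^ 2)]

open MeasureTheory intervalIntegral Set in
lemma aux_ii_gK {m : ℝ} (hm0 : 0 ≤ m) (hm1 : m < 1) :
    IntervalIntegrable (fun α : ℝ => 1 / (Real.sqrt (1 - α ^ 2) * Real.sqrt (1 - m * α ^ 2)))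
      volume 0 1 := by
  have hmaj : IntervalIntegrable (fun x : ℝ => (1 / Real.sqrt (1 - m)) * (1 / Real.sqrt (1 - x ^ 2)))
      volume 0 1 := aux_ii_base.const_mul _
  refine hmaj.mono_fun' ?_ ?_
  · refine Measurable.aestronglyMeasurable ?_
    exact measurable_const.div
      (((measurable_const.sub (measurable_id.pow_const 2)).sqrt).mul
        ((measurable_const.sub ((measurable_id.pow_const 2).const_mul m)).sqrt))
  · rw [Filter.EventuallyLE, ae_restrict_iff' measurableSet_uIoc]
    refine MeasureTheory.ae_of_all _ (fun x hx => ?_)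
    rw [Set.uIoc_of_le (by norm_num : (0:ℝ) ≤ 1)] at hx
    obtain ⟨hx0, hx1⟩ := hx
    have hsm : 0 < Real.sqrt (1 - m) := Real.sqrt_pos.mpr (by linarith)
    have htm : Real.sqrt (1 - m) ≤ Real.sqrt (1 - m * x ^ 2) :=
      Real.sqrt_le_sqrt (by nlinarith [mul_le_mul_of_nonneg_left (show x ^ 2 ≤ 1 by nlinarith) hm0])
    rw [Real.norm_eq_abs, abs_of_nonneg (by positivity)]
    rcases eq_or_lt_of_le (Real.sqrt_nonneg (1 - x ^ 2)) with h | h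
    · rw [← h]
      simp
    · have hmul : Real.sqrt (1 - m) * Real.sqrt (1 - x ^ 2)
          ≤ Real.sqrt (1 - x ^ 2) * Real.sqrt (1 - m * x ^ 2) := by
        rw [mul_comm (Real.sqrt (1 - x ^ 2))]
        exact mul_le_mul_of_nonneg_right htm h.le
      calc 1 / (Real.sqrt (1 - x ^ 2) * Real.sqrt (1 - m * x ^ 2))
          ≤ 1 / (Real.sqrt (1 - m) * Real.sqrt (1 - x ^ 2)) :=
            one_div_le_one_div_of_le (by positivity) hmul
        _ = 1 / Real.sqrt (1 - m) * (1 / Real.sqrt (1 - x ^ 2)) := by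
            rw [one_div_mul_one_div]

open MeasureTheory intervalIntegral Set in
lemma aux_integral_comp_sin {g φ : ℝ → ℝ} (hg : IntervalIntegrable g volume 0 1)
    (hgc : ContinuousOn g (Set.Ioo 0 1)) (hφ : Continuous φ)
    (hφg : ∀ θ ∈ Set.Ico (0:ℝ) (π/2), Real.cos θ * g (Real.sin θ) = φ θ) :
    ∫ θ in (0:ℝ)..(π/2), φ θ = ∫ α in (0:ℝ)..1, g α := by
  have hπ := Real.pi_pos
  have hpi : (0:ℝ) < π/2 := by linarith
  have hne := aux_ae_ne_real (π/2)
  have hIcc : Set.uIcc (0:ℝ) (π/2) = Set.Icc 0 (π/2) := Set.uIcc_of_le hpi.le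
  have hstep1 : ∫ θ in (0:ℝ)..(π/2), φ θ
      = ∫ θ in (0:ℝ)..(π/2), Real.cos θ • (g ∘ Real.sin) θ := by
    refine intervalIntegral.integral_congr_ae ?_
    filter_upwards [hne] with x hx hmem
    rw [Set.uIoc_of_le hpi.le] at hmem
    have hx2 : x ∈ Set.Ico (0:ℝ) (π/2) := ⟨hmem.1.le, lt_of_le_of_ne hmem.2 hx⟩
    simp only [smul_eq_mul, Function.comp_apply]
    exact (hφg x hx2).symm
  rw [hstep1]
  have himg1 : Real.sin '' Set.Ioo (min (0:ℝ) (π/2)) (max 0 (π/2)) ⊆ Set.Ioo 0 1 := by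
    rw [min_eq_left hpi.le, max_eq_right hpi.le]
    rintro _ ⟨θ, hθ, rfl⟩
    refine ⟨Real.sin_pos_of_pos_of_lt_pi hθ.1 (hθ.2.trans (by linarith)), ?_⟩
    calc Real.sin θ < Real.sin (π/2) := by
          refine Real.strictMonoOn_sin ⟨by linarith [hθ.1], by linarith [hθ.2]⟩
            ⟨by linarith, le_refl _⟩ hθ.2
      _ = 1 := Real.sin_pi_div_two
  have himg2 : Real.sin '' Set.uIcc (0:ℝ) (π/2) ⊆ Set.Icc 0 1 := by
    rw [hIcc]
    rintro _ ⟨θ, hθ, rfl⟩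
    exact ⟨Real.sin_nonneg_of_nonneg_of_le_pi hθ.1 (hθ.2.trans (by linarith)),
      Real.sin_le_one θ⟩
  have hg1 : IntegrableOn g (Real.sin '' Set.uIcc (0:ℝ) (π/2)) := by
    refine MeasureTheory.IntegrableOn.mono_set ?_ himg2
    exact (intervalIntegrable_iff_integrableOn_Icc_of_le (by norm_num)).mp hg
  have hg2 : IntegrableOn (fun x => Real.cos x • (g ∘ Real.sin) x) (Set.uIcc (0:ℝ) (π/2)) := by
    rw [hIcc]
    refine MeasureTheory.Integrable.congr hφ.integrableOn_Icc ?_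
    filter_upwards [MeasureTheory.ae_restrict_mem measurableSet_Icc,
      MeasureTheory.ae_restrict_of_ae hne] with x hx hne'
    have hx2 : x ∈ Set.Ico (0:ℝ) (π/2) := ⟨hx.1, lt_of_le_of_ne hx.2 hne'⟩
    simp only [smul_eq_mul, Function.comp_apply]
    exact (hφg x hx2).symm
  have hmain := intervalIntegral.integral_comp_smul_deriv''' (a := (0:ℝ)) (b := π/2)
    (f := Real.sin) (f' := Real.cos) (g := g)
    Real.continuous_sin.continuousOn
    (fun x _ => (Real.hasDerivAt_sin x).hasDerivWithinAt)
    (hgc.mono himg1) hg1 hg2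
  simpa using hmain

open MeasureTheory intervalIntegral Set in
lemma aux_integral_two_pi_eq {H : ℝ → ℝ} (hH : Continuous H)
    (h1 : ∀ y, H (y + π) = H y) (h2 : ∀ y, H (π - y) = H y) :
    ∫ y in (0:ℝ)..(2*π), H y = 4 * ∫ y in (0:ℝ)..(π/2), H y := by
  have hint : ∀ a b : ℝ, IntervalIntegrable H volume a b := fun a b =>
    hH.intervalIntegrable a b
  have e1 : ∫ y in (0:ℝ)..(2*π), H y = (∫ y in (0:ℝ)..π, H y) + ∫ y in π..(2*π), H y :=
    (intervalIntegral.integral_add_adjacent_intervals (hint 0 π) (hint π (2*π))).symm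
  have e2 : ∫ y in π..(2*π), H y = ∫ y in (0:ℝ)..π, H y := by
    have h := intervalIntegral.integral_comp_add_right (a := (0:ℝ)) (b := π) H π
    rw [zero_add, show π + π = 2*π by ring] at h
    rw [← h]
    exact intervalIntegral.integral_congr (fun y _ => h1 y)
  have e3 : ∫ y in (0:ℝ)..π, H y = (∫ y in (0:ℝ)..(π/2), H y) + ∫ y in (π/2)..π, H y :=
    (intervalIntegral.integral_add_adjacent_intervals (hint 0 (π/2)) (hint (π/2) π)).symm
  have e4 : ∫ y in (π/2)..π, H y = ∫ y in (0:ℝ)..(π/2), H y := by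
    have h := intervalIntegral.integral_comp_sub_left (a := (0:ℝ)) (b := π/2) H π
    rw [sub_zero, show π - π/2 = π/2 by ring] at h
    rw [← h]
    exact intervalIntegral.integral_congr (fun y _ => h2 y)
  rw [e1, e2, e3, e4]; ring

/-- Let `0 ≤ a ≤ b`, `b < c`, `a² + b² ≤ c²` and
`k = √((b²−a²)/(c²−a²))`. Then the area of the fundamental domain, computed from the
metric `g = P(y)dx² + (2P(y)/(Q+2P(y)))dy²`, equals
`S(a,b,c) = (4π/√(c²−a²))·(2(c²−a²)·E(k) − (c²−a²−b²)·K(k))`. -/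
theorem area_fundamental_domain (a b c : ℝ) (ha : 0 ≤ a) (hab : a ≤ b) (hbc : b < c)
    (habc : a ^ 2 + b ^ 2 ≤ c ^ 2) :
    ∫ y in (0:ℝ)..(2 * Real.pi), ∫ _x in (0:ℝ)..(2 * Real.pi),
        Real.sqrt (Pm a b c y * (2 * Pm a b c y / (Qm a b c + 2 * Pm a b c y))) =
      4 * Real.pi / Real.sqrt (c ^ 2 - a ^ 2) *
        (2 * (c ^ 2 - a ^ 2) * ellipticE (Real.sqrt ((b ^ 2 - a ^ 2) / (c ^ 2 - a ^ 2))) -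
          (c ^ 2 - a ^ 2 - b ^ 2) * ellipticK (Real.sqrt ((b ^ 2 - a ^ 2) / (c ^ 2 - a ^ 2)))) := by
  have hπ := Real.pi_pos
  set A := c ^ 2 - a ^ 2 with hA_def
  have hac : a < c := lt_of_le_of_lt hab hbc
  have hA : 0 < A := by rw [hA_def]; nlinarith
  have hd0 : 0 ≤ b ^ 2 - a ^ 2 := by nlinarith
  have hbc2 : b ^ 2 < c ^ 2 := by nlinarith
  set m := (b ^ 2 - a ^ 2) / A with hm_def
  have hm0 : 0 ≤ m := div_nonneg hd0 hA.le
  have hm1 : m < 1 := (div_lt_one hA).mpr (by rw [hA_def]; nlinarith)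
  have hk2 : (Real.sqrt m) ^ 2 = m := Real.sq_sqrt hm0
  have hmA : m * A = b ^ 2 - a ^ 2 := div_mul_cancel₀ _ hA.ne'
  set sA := Real.sqrt A with hsA_def
  have hsA : 0 < sA := Real.sqrt_pos.mpr hA
  have hsA2 : sA ^ 2 = A := Real.sq_sqrt hA.le
  have hQ : Qm a b c = A - b ^ 2 := by simp only [Qm, hA_def]
  have ht2pos : ∀ y : ℝ, 0 < 1 - m * Real.sin y ^ 2 := by
    intro y
    nlinarith [Real.sin_sq_le_one y, sq_nonneg (Real.sin y)]
  set H : ℝ → ℝ := fun y => sA * Real.sqrt (1 - m * Real.sin y ^ 2)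
    - Qm a b c / (2 * sA) * (1 / Real.sqrt (1 - m * Real.sin y ^ 2)) with hH_def
  clear_value A m sA H
  -- pointwise identity
  have hFH : ∀ y : ℝ,
      Real.sqrt (Pm a b c y * (2 * Pm a b c y / (Qm a b c + 2 * Pm a b c y))) = H y := by
    intro y
    have hcos2 : Real.cos (2 * y) = 1 - 2 * Real.sin y ^ 2 := by
      rw [Real.cos_two_mul, Real.cos_sq']; ring
    have hQP : Qm a b c + 2 * Pm a b c y = 2 * A * (1 - m * Real.sin y ^ 2) := by
      have h : 2 * A * (1 - m * Real.sin y ^ 2)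
          = 2 * A - 2 * (m * A) * Real.sin y ^ 2 := by ring
      rw [h, hmA, hA_def]
      simp only [Qm, Pm, hcos2]
      ring
    have hP : 0 < Pm a b c y := by
      have hc1 := Real.neg_one_le_cos (2 * y)
      simp only [Pm]
      nlinarith [mul_nonneg hd0 (by linarith : (0:ℝ) ≤ Real.cos (2 * y) + 1)]
    set t := Real.sqrt (1 - m * Real.sin y ^ 2) with ht_def
    have ht : 0 < t := Real.sqrt_pos.mpr (ht2pos y)
    have ht2 : t ^ 2 = 1 - m * Real.sin y ^ 2 := Real.sq_sqrt (ht2pos y).le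
    have hQP' : Qm a b c + 2 * Pm a b c y = 2 * sA ^ 2 * t ^ 2 := by
      rw [hQP, hsA2, ht2]
    have h2P : 2 * Pm a b c y = 2 * sA ^ 2 * t ^ 2 - Qm a b c := by linarith [hQP']
    have hval : Pm a b c y * (2 * Pm a b c y / (Qm a b c + 2 * Pm a b c y))
        = (Pm a b c y / (sA * t)) ^ 2 := by
      rw [hQP']
      field_simp
    rw [hval, Real.sqrt_sq (by positivity)]
    simp only [hH_def, ← ht_def]
    have hrhs : sA * t - Qm a b c / (2 * sA) * (1 / t)
        = (2 * sA ^ 2 * t ^ 2 - Qm a b c) / (2 * (sA * t)) := by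
      field_simp
    rw [hrhs, ← h2P, mul_div_mul_left _ _ (two_ne_zero)]
  -- continuity of H
  have hcont_in : Continuous fun y : ℝ => 1 - m * Real.sin y ^ 2 := by
    exact continuous_const.sub (continuous_const.mul (Real.continuous_sin.pow 2))
  have hcont_t : Continuous fun y : ℝ => Real.sqrt (1 - m * Real.sin y ^ 2) :=
    Real.continuous_sqrt.comp hcont_in
  have hcont_t_ne : ∀ y : ℝ, Real.sqrt (1 - m * Real.sin y ^ 2) ≠ 0 := fun y =>
    (Real.sqrt_pos.mpr (ht2pos y)).ne'
  have hH_cont : Continuous H := by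
    rw [hH_def]
    exact (continuous_const.mul hcont_t).sub
      (continuous_const.mul (continuous_const.div hcont_t hcont_t_ne))
  have hH_per : ∀ y, H (y + π) = H y := by
    intro y
    simp only [hH_def, Real.sin_add_pi, neg_sq]
  have hH_sym : ∀ y, H (π - y) = H y := by
    intro y
    simp only [hH_def, Real.sin_pi_sub]
  -- the two elliptic integral identities
  have hE : (∫ θ in (0:ℝ)..(π/2), Real.sqrt (1 - m * Real.sin θ ^ 2))
      = ∫ α in (0:ℝ)..1, Real.sqrt (1 - m * α ^ 2) / Real.sqrt (1 - α ^ 2) := by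
    refine aux_integral_comp_sin (aux_ii_gE hm0) ?_ hcont_t ?_
    · refine ContinuousOn.div ?_ ?_ ?_
      · exact (Real.continuous_sqrt.comp
          (continuous_const.sub (continuous_const.mul (continuous_pow 2)))).continuousOn
      · exact (Real.continuous_sqrt.comp
          (continuous_const.sub (continuous_pow 2))).continuousOn
      · intro x hx
        exact (Real.sqrt_pos.mpr (by nlinarith [hx.1, hx.2])).ne'
    · intro θ hθ
      have hcosθ : 0 < Real.cos θ :=
        Real.cos_pos_of_mem_Ioo ⟨by linarith [hθ.1, Real.pi_pos], hθ.2⟩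
      have h1 : Real.sqrt (1 - Real.sin θ ^ 2) = Real.cos θ := by
        rw [← Real.cos_sq']
        exact Real.sqrt_sq hcosθ.le
      rw [h1, mul_div_cancel₀ _ hcosθ.ne']
  have hK : (∫ θ in (0:ℝ)..(π/2), 1 / Real.sqrt (1 - m * Real.sin θ ^ 2))
      = ∫ α in (0:ℝ)..1, 1 / (Real.sqrt (1 - α ^ 2) * Real.sqrt (1 - m * α ^ 2)) := by
    refine aux_integral_comp_sin (g := fun α : ℝ => 1 / (Real.sqrt (1 - α ^ 2) * Real.sqrt (1 - m * α ^ 2)))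
      (φ := fun θ : ℝ => 1 / Real.sqrt (1 - m * Real.sin θ ^ 2)) (aux_ii_gK hm0 hm1) ?_
      (continuous_const.div hcont_t hcont_t_ne) ?_
    · refine ContinuousOn.div continuousOn_const ?_ ?_
      · exact ((Real.continuous_sqrt.comp
          (continuous_const.sub (continuous_pow 2))).mul
          (Real.continuous_sqrt.comp
          (continuous_const.sub (continuous_const.mul (continuous_pow 2))))).continuousOn
      · intro x hx
        have h1 : 0 < Real.sqrt (1 - x ^ 2) := Real.sqrt_pos.mpr (by nlinarith [hx.1, hx.2])
        have h2 : 0 < Real.sqrt (1 - m * x ^ 2) :=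
          Real.sqrt_pos.mpr (by nlinarith [hx.1, hx.2])
        positivity
    · intro θ hθ
      have hcosθ : 0 < Real.cos θ :=
        Real.cos_pos_of_mem_Ioo ⟨by linarith [hθ.1, Real.pi_pos], hθ.2⟩
      have h1 : Real.sqrt (1 - Real.sin θ ^ 2) = Real.cos θ := by
        rw [← Real.cos_sq']
        exact Real.sqrt_sq hcosθ.le
      show Real.cos θ * (1 / (Real.sqrt (1 - Real.sin θ ^ 2) * Real.sqrt (1 - m * Real.sin θ ^ 2)))
        = 1 / Real.sqrt (1 - m * Real.sin θ ^ 2)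
      rw [h1, mul_one_div, div_mul_cancel_left₀ hcosθ.ne', one_div]
  have hEE : ellipticE (Real.sqrt m)
      = ∫ α in (0:ℝ)..1, Real.sqrt (1 - m * α ^ 2) / Real.sqrt (1 - α ^ 2) := by
    simp only [ellipticE, hk2]
  have hKK : ellipticK (Real.sqrt m)
      = ∫ α in (0:ℝ)..1, 1 / (Real.sqrt (1 - α ^ 2) * Real.sqrt (1 - m * α ^ 2)) := by
    simp only [ellipticK, hk2]
  -- split the quarter-period integral of H
  have hsplit : ∫ y in (0:ℝ)..(π/2), H y
      = sA * ellipticE (Real.sqrt m) - Qm a b c / (2 * sA) * ellipticK (Real.sqrt m) := by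
    rw [hEE, hKK, ← hE, ← hK]
    simp only [hH_def]
    have hi1 : IntervalIntegrable (fun y : ℝ => sA * Real.sqrt (1 - m * Real.sin y ^ 2))
        MeasureTheory.volume 0 (π/2) := (continuous_const.mul hcont_t).intervalIntegrable _ _
    have hi2 : IntervalIntegrable
        (fun y : ℝ => Qm a b c / (2 * sA) * (1 / Real.sqrt (1 - m * Real.sin y ^ 2)))
        MeasureTheory.volume 0 (π/2) := by
      apply Continuous.intervalIntegrable
      exact continuous_const.mul (continuous_const.div hcont_t hcont_t_ne)
    rw [intervalIntegral.integral_sub hi1 hi2,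
      intervalIntegral.integral_const_mul, intervalIntegral.integral_const_mul]
  -- assemble
  calc ∫ y in (0:ℝ)..(2 * π), ∫ _x in (0:ℝ)..(2 * π),
        Real.sqrt (Pm a b c y * (2 * Pm a b c y / (Qm a b c + 2 * Pm a b c y)))
      = ∫ y in (0:ℝ)..(2 * π), (2 * π) * H y := by
        refine intervalIntegral.integral_congr (fun y _ => ?_)
        rw [intervalIntegral.integral_const, smul_eq_mul, sub_zero, hFH y]
    _ = (2 * π) * ∫ y in (0:ℝ)..(2 * π), H y := intervalIntegral.integral_const_mul _ _
    _ = (2 * π) * (4 * ∫ y in (0:ℝ)..(π/2), H y) := by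
        rw [aux_integral_two_pi_eq hH_cont hH_per hH_sym]
    _ = (2 * π) * (4 * (sA * ellipticE (Real.sqrt m)
          - Qm a b c / (2 * sA) * ellipticK (Real.sqrt m))) := by rw [hsplit]
    _ = 4 * π / sA * (2 * A * ellipticE (Real.sqrt m)
          - (A - b ^ 2) * ellipticK (Real.sqrt m)) := by
        rw [hQ]
        field_simp
        ring_nf
        linear_combination (2 * ellipticE (Real.sqrt m)) * hsA2
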